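/- Let $g_1, \ldots, g_{r+1}$ be nonzero complex numbers (not necessarily distinct) and define $z_{1,m}$ as the solution of the linear recursion $\sum_{k=0}^{r+1}(-1)^k x_k z_{1,m+k} = 0$ (where $\prod_i(\gamma - g_i) = \sum_k (-1)^k x_{r+1-k}\gamma^k$) with $z_{1,0}=1$, $z_{1,-m}=0$ for $m=1,\ldots,r$. If the sequence $(z_{1,m})_{m\in\mathbb{Z}}$ is periodic (there exists $p \geq 1$ with $z_{1,m+p} = z_{1,m}$ for all $m$), then all $g_i$ are distinct roots of unity. -/

import Mathlib

open Polynomial Finset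

theorem periodic_recursion_roots_of_unity (r : ℕ) (hr : 1 ≤ r)
    (g : Fin (r + 1) → ℂ) (hg0 : ∀ i, g i ≠ 0)
    (x : ℤ → ℂ)
    (hx : ∀ γ : ℂ, ∏ i, (γ - g i) =
      ∑ k ∈ Finset.range (r + 2), (-1) ^ k * x ((r : ℤ) + 1 - k) * γ ^ k)
    (z : ℤ → ℂ)
    (hrec : ∀ m : ℤ, ∑ k ∈ Finset.range (r + 2), (-1) ^ k * x k * z (m + k) = 0)
    (hz0 : z 0 = 1)
    (hzneg : ∀ m : ℕ, 1 ≤ m → m ≤ r → z (-(m : ℤ)) = 0)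
    (hper : ∃ p : ℕ, 1 ≤ p ∧ ∀ m : ℤ, z (m + p) = z m) :
    Function.Injective g ∧ ∀ i, ∃ k : ℕ, 1 ≤ k ∧ g i ^ k = 1 := by
  classical
  obtain ⟨p, hp1, hper⟩ := hper
  set ψ : ℤ → ℂ[X] → ℂ := fun m q => q.sum fun k a => a * z (m - k) with hψ
  have ψ_monomial : ∀ (m : ℤ) (n : ℕ) (a : ℂ), ψ m (monomial n a) = a * z (m - n) := by
    intro m n a
    simp only [hψ]
    exact Polynomial.sum_monomial_index a _ (by simp)
  have ψ_add : ∀ (m : ℤ) (u v : ℂ[X]), ψ m (u + v) = ψ m u + ψ m v := by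
    intro m u v
    exact Polynomial.sum_add_index u v _ (fun _ => by simp) (fun _ b c => add_mul b c _)
  have ψ_zero : ∀ m, ψ m (0 : ℂ[X]) = 0 := fun m => Polynomial.sum_zero_index _
  have ψ_sum : ∀ (m : ℤ) (s : Finset ℕ) (F : ℕ → ℂ[X]),
      ψ m (∑ k ∈ s, F k) = ∑ k ∈ s, ψ m (F k) := by
    intro m s F
    induction s using Finset.induction_on with
    | empty => simp [ψ_zero]
    | insert _ _ hns ih => rw [Finset.sum_insert hns, Finset.sum_insert hns, ψ_add, ih]
  have ψ_mul_monomial : ∀ (m : ℤ) (n : ℕ) (c : ℂ) (q : ℂ[X]),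
      ψ m (monomial n c * q) = c * ψ (m - n) q := by
    intro m n c q
    induction q using Polynomial.induction_on' with
    | add u v hu hv => rw [mul_add, ψ_add, hu, hv, ψ_add, mul_add]
    | monomial j a =>
        rw [monomial_mul_monomial, ψ_monomial, ψ_monomial]
        rw [show m - ((n + j : ℕ) : ℤ) = m - n - j by push_cast; ring]
        ring
  have ann_mul : ∀ (a q : ℂ[X]), (∀ m, ψ m q = 0) → ∀ m, ψ m (a * q) = 0 := by
    intro a q hq
    induction a using Polynomial.induction_on' with
    | add u v hu hv => intro m; rw [add_mul, ψ_add, hu m, hv m, add_zero]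
    | monomial n c => intro m; rw [ψ_mul_monomial, hq, mul_zero]
  -- the characteristic polynomial
  set P : ℂ[X] := ∏ i, (X - C (g i)) with hP
  have hPR : P = ∑ k ∈ Finset.range (r + 2), monomial k (((-1 : ℂ)) ^ k * x ((r : ℤ) + 1 - k)) := by
    apply Polynomial.funext
    intro γ
    simp only [hP, Polynomial.eval_prod, Polynomial.eval_sub, Polynomial.eval_X,
      Polynomial.eval_C, Polynomial.eval_finset_sum, Polynomial.eval_monomial]
    exact hx γ
  have hannP : ∀ m : ℤ, ψ m P = 0 := by
    intro m
    have key := hrec (m - ((r : ℤ) + 1))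
    have hψP : ψ m P
        = ∑ k ∈ Finset.range (r + 2), ((-1 : ℂ)) ^ k * x ((r : ℤ) + 1 - k) * z (m - k) := by
      rw [hPR, ψ_sum]
      refine Finset.sum_congr rfl fun k _ => ?_
      rw [ψ_monomial]
    have hrefl := Finset.sum_range_reflect
      (fun k : ℕ => ((-1 : ℂ)) ^ k * x k * z (m - ((r : ℤ) + 1) + k)) (r + 2)
    try simp only at hrefl
    rw [key] at hrefl
    have hterm : ∑ k ∈ Finset.range (r + 2), ((-1 : ℂ)) ^ k * x ((r : ℤ) + 1 - k) * z (m - k)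
        = (-1 : ℂ) ^ (r + 1) * ∑ j ∈ Finset.range (r + 2),
            ((-1 : ℂ)) ^ (r + 2 - 1 - j) * x ((r + 2 - 1 - j : ℕ) : ℤ)
              * z (m - ((r : ℤ) + 1) + ((r + 2 - 1 - j : ℕ) : ℤ)) := by
      rw [Finset.mul_sum]
      refine Finset.sum_congr rfl fun j hj => ?_
      have hj' : j ≤ r + 1 := by
        have := Finset.mem_range.mp hj; omega
      have h1 : r + 2 - 1 - j = r + 1 - j := by omega
      have h2 : ((r + 1 - j : ℕ) : ℤ) = (r : ℤ) + 1 - j := by omega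
      have h3 : m - ((r : ℤ) + 1) + ((r : ℤ) + 1 - j) = m - j := by ring
      rw [h1, h2, h3]
      have h4 : ((-1 : ℂ)) ^ (r + 1) * ((-1 : ℂ)) ^ (r + 1 - j) = (-1 : ℂ) ^ j := by
        have h5 : ((-1 : ℂ)) ^ (r + 1) = (-1 : ℂ) ^ (r + 1 - j) * (-1 : ℂ) ^ j := by
          rw [← pow_add]; congr 1; omega
        calc ((-1 : ℂ)) ^ (r + 1) * ((-1 : ℂ)) ^ (r + 1 - j)
            = ((-1 : ℂ) ^ (r + 1 - j) * (-1 : ℂ) ^ (r + 1 - j)) * (-1 : ℂ) ^ j := by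
              rw [h5]; ring
          _ = (-1 : ℂ) ^ j := by
              rw [← pow_add, Even.neg_one_pow ⟨r + 1 - j, rfl⟩, one_mul]
      linear_combination (-(x ((r : ℤ) + 1 - j) * z (m - j))) * h4
    rw [hψP, hterm, hrefl, mul_zero]
  -- X^p - 1 annihilates z
  have hannXp : ∀ m : ℤ, ψ m ((X : ℂ[X]) ^ p - 1) = 0 := by
    intro m
    have hXp : (X : ℂ[X]) ^ p - 1 = monomial p 1 + monomial 0 (-1) := by
      simp [X_pow_eq_monomial, sub_eq_add_neg]
    rw [hXp, ψ_add, ψ_monomial, ψ_monomial]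
    have := hper (m - p)
    rw [sub_add_cancel] at this
    simp [this]
  -- minimality: a nonzero annihilator has degree > r
  have hmin : ∀ q : ℂ[X], (∀ m, ψ m q = 0) → q.natDegree ≤ r → q = 0 := by
    intro q hq hdeg
    by_contra hq0
    have ht := hq (q.natTrailingDegree)
    simp only [hψ] at ht
    rw [Polynomial.sum_def] at ht
    rw [Finset.sum_eq_single q.natTrailingDegree ?_ ?_] at ht
    · rw [sub_self, hz0, mul_one] at ht
      exact (Polynomial.trailingCoeff_nonzero_iff_nonzero.mpr hq0) ht
    · intro k hk hkne
      have h1 : q.natTrailingDegree ≤ k := Polynomial.natTrailingDegree_le_of_mem_supp k hk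
      have h2 : k ≤ q.natDegree := Polynomial.le_natDegree_of_mem_supp k hk
      have h3 : ((q.natTrailingDegree : ℤ) - k) = -((k - q.natTrailingDegree : ℕ) : ℤ) := by omega
      rw [h3, hzneg _ (by omega) (by omega), mul_zero]
    · intro habs
      exact absurd (Polynomial.natTrailingDegree_mem_support_of_nonzero hq0) habs
  -- remainder argument
  have hPmonic : P.Monic := monic_prod_of_monic _ _ fun i _ => monic_X_sub_C _
  have hPdeg : P.natDegree = r + 1 := by
    rw [hP, Polynomial.natDegree_prod _ _ fun i _ => Polynomial.X_sub_C_ne_zero (g i)]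
    simp
  set e : ℂ[X] := ((X : ℂ[X]) ^ p - 1) %ₘ P with he
  have hanne : ∀ m, ψ m e = 0 := by
    intro m
    have hdiv := Polynomial.modByMonic_add_div ((X : ℂ[X]) ^ p - 1) P
    have heq : e = ((X : ℂ[X]) ^ p - 1) + (-(((X : ℂ[X]) ^ p - 1) /ₘ P)) * P := by
      rw [he]; linear_combination hdiv
    rw [heq, ψ_add, hannXp, ann_mul _ _ hannP m, add_zero]
  have hedeg : e.natDegree ≤ r := by
    rcases eq_or_ne e 0 with h | h
    · simp [h]
    · have hlt := Polynomial.degree_modByMonic_lt ((X : ℂ[X]) ^ p - 1) hPmonic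
      rw [← he] at hlt
      have : e.natDegree < P.natDegree := by
        rwa [← Polynomial.natDegree_lt_natDegree_iff h] at hlt
      omega
  have hdvd : P ∣ (X : ℂ[X]) ^ p - 1 :=
    (Polynomial.modByMonic_eq_zero_iff_dvd hPmonic).mp (hmin e hanne hedeg)
  have hsq : Squarefree ((X : ℂ[X]) ^ p - 1) := by
    have hsep : ((X : ℂ[X]) ^ p - C 1).Separable :=
      Polynomial.separable_X_pow_sub_C 1 (Nat.cast_ne_zero.mpr (by omega)) one_ne_zero
    simpa using hsep.squarefree
  rw [hP] at hdvd
  constructor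
  · intro i j hij
    by_contra hne
    have hdvd2 : ((X : ℂ[X]) - C (g j)) * ((X : ℂ[X]) - C (g j)) ∣
        ∏ k : Fin (r + 1), ((X : ℂ[X]) - C (g k)) := by
      have hsub := Finset.prod_dvd_prod_of_subset ({i, j} : Finset (Fin (r + 1))) Finset.univ
        (fun k => (X : ℂ[X]) - C (g k)) (Finset.subset_univ _)
      rw [Finset.prod_pair hne, hij] at hsub
      exact hsub
    exact Polynomial.not_isUnit_X_sub_C (g j) (hsq _ (dvd_trans hdvd2 hdvd))
  · intro i
    refine ⟨p, hp1, ?_⟩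
    have h1 : ((X : ℂ[X]) - C (g i)) ∣ (X : ℂ[X]) ^ p - 1 :=
      dvd_trans (Finset.dvd_prod_of_mem (fun k => (X : ℂ[X]) - C (g k)) (Finset.mem_univ i)) hdvd
    have h2 := Polynomial.dvd_iff_isRoot.mp h1
    simpa [Polynomial.IsRoot, sub_eq_zero] using h2
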